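/- Let E be a real Banach space and E₀ a closed subspace of E. Then E₀ is an M-ideal in E if and only if E₀ has the 3-ball property in E: for every x in the closed unit ball of E, every y₁, y₂, y₃ in the closed unit ball of E₀ and every ε > 0 there exists y ∈ E₀ such that ‖x + yᵢ − y‖ ≤ 1 + ε for i = 1, 2, 3. -/

import Mathlib

/-- A subset `E₀` of a Banach space `E` is an *M-ideal* in `E` if there is a bounded linear
projection `P` on the dual `E*` whose kernel is the annihilator of `E₀` and which satisfies
`‖φ‖ = ‖P φ‖ + ‖φ - P φ‖` for every `φ ∈ E*`. -/
def IsMIdeal {E : Type*} [NormedAddCommGroup E] [NormedSpace ℝ E] (E₀ : Set E) : Prop :=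
  ∃ P : (E →L[ℝ] ℝ) →L[ℝ] (E →L[ℝ] ℝ),
    (∀ φ, P (P φ) = P φ) ∧
    (∀ φ, P φ = 0 ↔ ∀ y ∈ E₀, φ y = 0) ∧
    (∀ φ, ‖φ‖ = ‖P φ‖ + ‖φ - P φ‖)

set_option synthInstance.maxHeartbeats 1000000
set_option maxHeartbeats 1000000

namespace MIdealAux

/-- helper: if `a ≤ b + δ * C` for all small positive `δ`, then `a ≤ b`. -/
lemma le_of_forall_small {a b C : ℝ} (h : ∀ δ : ℝ, 0 < δ → δ < 1 → a ≤ b + δ * C) : a ≤ b := by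
  by_contra hab
  push_neg at hab
  have hC : 0 < max C 1 := lt_of_lt_of_le one_pos (le_max_right _ _)
  set δ : ℝ := min (1/2) ((a - b) / (2 * max C 1)) with hδdef
  have hδpos : 0 < δ := lt_min (by norm_num) (div_pos (by linarith) (by positivity))
  have hδlt : δ < 1 := lt_of_le_of_lt (min_le_left _ _) (by norm_num)
  have h1 : a ≤ b + δ * C := h δ hδpos hδlt
  have h2 : δ * C ≤ δ * max C 1 := mul_le_mul_of_nonneg_left (le_max_left _ _) hδpos.le
  have h3 : δ ≤ (a - b) / (2 * max C 1) := min_le_right _ _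
  have h4 : δ * (2 * max C 1) ≤ a - b := (le_div_iff₀ (by positivity)).mp h3
  nlinarith

section NearNorm

variable {E : Type*} [NormedAddCommGroup E] [NormedSpace ℝ E]

/-- near-norming element for a functional. -/
lemma exists_near_norm (f : E →L[ℝ] ℝ) {δ : ℝ} (hδ : 0 < δ) :
    ∃ x : E, ‖x‖ ≤ 1 ∧ ‖f‖ - δ ≤ f x := by
  obtain ⟨x, hx, hfx⟩ := f.exists_lt_apply_of_lt_opNorm (r := ‖f‖ - δ) (by linarith)
  rcases le_or_gt 0 (f x) with h | h
  · exact ⟨x, hx.le, by rw [Real.norm_eq_abs, abs_of_nonneg h] at hfx; linarith⟩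
  · refine ⟨-x, by rw [norm_neg]; exact hx.le, ?_⟩
    rw [map_neg, Real.norm_eq_abs, abs_of_neg h] at *
    linarith

variable (E₀ : Submodule ℝ E)

/-- The 3-ball property. -/
def ThreeBall : Prop :=
  ∀ x : E, ‖x‖ ≤ 1 →
    ∀ y₁ ∈ E₀, ∀ y₂ ∈ E₀, ∀ y₃ ∈ E₀,
      ‖y₁‖ ≤ 1 → ‖y₂‖ ≤ 1 → ‖y₃‖ ≤ 1 →
        ∀ ε > (0 : ℝ), ∃ y ∈ E₀,
          ‖x + y₁ - y‖ ≤ 1 + ε ∧ ‖x + y₂ - y‖ ≤ 1 + ε ∧ ‖x + y₃ - y‖ ≤ 1 + ε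

/-- `χ` attains its norm on `E₀`. -/
def IsW (χ : E →L[ℝ] ℝ) : Prop := ‖χ‖ ≤ ‖χ.comp E₀.subtypeL‖

variable {E₀}

lemma res_norm_le (χ : E →L[ℝ] ℝ) : ‖χ.comp E₀.subtypeL‖ ≤ ‖χ‖ := by
  refine ContinuousLinearMap.opNorm_le_bound _ (norm_nonneg χ) fun y => ?_
  exact χ.le_opNorm (y : E)

lemma clm_norm_smul {X : Type*} [SeminormedAddCommGroup X] [NormedSpace ℝ X]
    (c : ℝ) (f : X →L[ℝ] ℝ) : ‖c • f‖ = |c| * ‖f‖ := by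
  rcases eq_or_ne c 0 with rfl | hc
  · simp
  · refine le_antisymm ?_ ?_
    · simpa [Real.norm_eq_abs] using ContinuousLinearMap.opNorm_smul_le c f
    · have h := ContinuousLinearMap.opNorm_smul_le c⁻¹ (c • f)
      rw [inv_smul_smul₀ hc, Real.norm_eq_abs, abs_inv] at h
      have habs : (0:ℝ) < |c| := abs_pos.mpr hc
      have h2 := mul_le_mul_of_nonneg_left h (abs_nonneg c)
      rw [← mul_assoc, mul_inv_cancel₀ (ne_of_gt habs), one_mul] at h2
      exact h2
lemma IsW.zero : IsW E₀ (0 : E →L[ℝ] ℝ) := by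
  unfold IsW
  rw [ContinuousLinearMap.zero_comp, norm_zero]
  exact norm_nonneg ((0 : E →L[ℝ] ℝ).comp E₀.subtypeL)

lemma IsW.smul {χ : E →L[ℝ] ℝ} (h : IsW E₀ χ) (c : ℝ) : IsW E₀ (c • χ) := by
  unfold IsW at *
  rw [ContinuousLinearMap.smul_comp, clm_norm_smul, clm_norm_smul]
  exact mul_le_mul_of_nonneg_left h (abs_nonneg _)

/-- near-norming element in `E₀` for a functional in `W`. -/
lemma exists_near_norm_res {χ : E →L[ℝ] ℝ} (hχ : IsW E₀ χ) {δ : ℝ} (hδ : 0 < δ) :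
    ∃ y : E, y ∈ E₀ ∧ ‖y‖ ≤ 1 ∧ ‖χ‖ - δ ≤ χ y := by
  obtain ⟨y, hy1, hy2⟩ := exists_near_norm (χ.comp E₀.subtypeL) hδ
  refine ⟨(y : E), y.2, hy1, ?_⟩
  have : (χ.comp E₀.subtypeL) y = χ (y : E) := rfl
  rw [this] at hy2
  have h' : ‖χ‖ ≤ ‖χ.comp E₀.subtypeL‖ := hχ
  linarith

/-- The key (2-ball) estimate: a functional in `W` and one in the annihilator are
`ℓ¹`-orthogonal. -/
lemma l1_orth (hb : ThreeBall E₀) {χ ψ : E →L[ℝ] ℝ} (hχ : IsW E₀ χ)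
    (hψ : ∀ y ∈ E₀, ψ y = 0) : ‖χ‖ + ‖ψ‖ ≤ ‖χ + ψ‖ := by
  refine le_of_forall_small (C := ‖χ + ψ‖ + ‖χ‖ + 3) fun δ hδ hδ1 => ?_
  obtain ⟨x, hx, hψx⟩ := exists_near_norm ψ hδ
  obtain ⟨y, hyE, hy1, hχy⟩ := exists_near_norm_res hχ hδ
  obtain ⟨z, hzE, h1, h2, -⟩ :=
    hb x hx y hyE (-y) (E₀.neg_mem hyE) y hyE hy1 (by rw [norm_neg]; exact hy1) hy1 δ hδ
  have habs : ∀ (w : E) (g : E →L[ℝ] ℝ), ‖w‖ ≤ 1 + δ → |g w| ≤ ‖g‖ * (1 + δ) := by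
    intro w g hw
    rw [← Real.norm_eq_abs]
    exact (g.le_opNorm w).trans (mul_le_mul_of_nonneg_left hw (norm_nonneg g))
  have e2 : -(‖χ‖ * (1 + δ)) ≤ χ (x + -y - z) := by
    have := (abs_le.mp (habs _ χ h2)).1
    linarith
  have e3 : χ (x + y - z) = χ (x + -y - z) + 2 * χ y := by
    have : (x + y - z) = (x + -y - z) + (2:ℝ) • y := by module
    rw [this, map_add, map_smul, smul_eq_mul]
  have e4 : (χ + ψ) (x + y - z) = χ (x + y - z) + ψ x := by
    have hz : ψ z = 0 := hψ z hzE
    have hyy : ψ y = 0 := hψ y hyE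
    simp only [ContinuousLinearMap.add_apply, map_add, map_sub, hz, hyy]
    ring
  have e5 : (χ + ψ) (x + y - z) ≤ ‖χ + ψ‖ * (1 + δ) := by
    have := (abs_le.mp (habs _ (χ + ψ) h1)).2
    linarith
  nlinarith [norm_nonneg (χ + ψ), norm_nonneg χ]

/-- Existence of the decomposition. -/
lemma exists_decomp (hb : ThreeBall E₀) (φ : E →L[ℝ] ℝ) :
    ∃ χ : E →L[ℝ] ℝ, (∀ y ∈ E₀, (φ - χ) y = 0) ∧ IsW E₀ χ ∧ ‖φ‖ = ‖φ - χ‖ + ‖χ‖ := by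
  obtain ⟨χ, hext, hnorm⟩ := exists_extension_norm_eq E₀ (φ.comp E₀.subtypeL)
  have hres : χ.comp E₀.subtypeL = φ.comp E₀.subtypeL := by
    ext y; exact hext y
  have hW : IsW E₀ χ := by rw [IsW, hres, hnorm]
  have hann : ∀ y ∈ E₀, (φ - χ) y = 0 := by
    intro y hy
    have := hext ⟨y, hy⟩
    simp only [ContinuousLinearMap.sub_apply]
    rw [show φ y = (φ.comp E₀.subtypeL) ⟨y, hy⟩ from rfl, ← this]
    simp
  refine ⟨χ, hann, hW, le_antisymm ?_ ?_⟩
  · calc ‖φ‖ = ‖(φ - χ) + χ‖ := by congr 1; abel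
      _ ≤ ‖φ - χ‖ + ‖χ‖ := norm_add_le _ _
  · calc ‖φ - χ‖ + ‖χ‖ = ‖χ‖ + ‖φ - χ‖ := by ring
      _ ≤ ‖χ + (φ - χ)‖ := l1_orth hb hW hann
      _ = ‖φ‖ := by congr 1; abel

/-- Uniqueness of the decomposition. -/
lemma decomp_unique (hb : ThreeBall E₀) {φ χ χ' : E →L[ℝ] ℝ}
    (hann : ∀ y ∈ E₀, (φ - χ) y = 0) (hχ : IsW E₀ χ)
    (hann' : ∀ y ∈ E₀, (φ - χ') y = 0) (hχ' : IsW E₀ χ') : χ = χ' := by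
  have hη : ∀ y ∈ E₀, (χ - χ') y = 0 := by
    intro y hy
    have h1 := hann y hy
    have h2 := hann' y hy
    simp only [ContinuousLinearMap.sub_apply] at *
    linarith
  have hres : χ.comp E₀.subtypeL = χ'.comp E₀.subtypeL := by
    ext y
    have h := hη (y : E) y.2
    simp only [ContinuousLinearMap.sub_apply] at h
    simp only [ContinuousLinearMap.comp_apply, Submodule.subtypeL_apply]
    linarith
  have key : ‖χ'‖ + ‖χ - χ'‖ ≤ ‖χ' + (χ - χ')‖ := l1_orth hb hχ' hη
  have : ‖χ' + (χ - χ')‖ = ‖χ‖ := by congr 1; abel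
  rw [this] at key
  have hle : ‖χ‖ ≤ ‖χ'‖ := by
    calc ‖χ‖ ≤ ‖χ.comp E₀.subtypeL‖ := hχ
      _ = ‖χ'.comp E₀.subtypeL‖ := by rw [hres]
      _ ≤ ‖χ'‖ := res_norm_le χ'
  have : ‖χ - χ'‖ ≤ 0 := by linarith
  have : χ - χ' = 0 := by
    rw [← norm_le_zero_iff]; exact this
  have := sub_eq_zero.mp this
  exact this

/-- `W` is closed under addition; this is where the full 3-ball property is used. -/
lemma IsW.add (hb : ThreeBall E₀) {χ₁ χ₂ : E →L[ℝ] ℝ} (h₁ : IsW E₀ χ₁) (h₂ : IsW E₀ χ₂) :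
    IsW E₀ (χ₁ + χ₂) := by
  obtain ⟨χ₀, hann, hW₀, hnorm⟩ := exists_decomp hb (χ₁ + χ₂)
  have hψ : ‖χ₁ + χ₂ - χ₀‖ ≤ 0 := by
    refine le_of_forall_small (C := ‖χ₁‖ + ‖χ₂‖ + ‖χ₀‖ + 4) fun δ hδ hδ1 => ?_
    obtain ⟨x, hx, hχx⟩ := exists_near_norm (χ₁ + χ₂) hδ
    obtain ⟨y₁, hy₁E, hy₁n, hχ₁y⟩ := exists_near_norm_res h₁ hδ
    obtain ⟨y₂, hy₂E, hy₂n, hχ₂y⟩ := exists_near_norm_res h₂ hδ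
    obtain ⟨y₀, hy₀E, hy₀n, hχ₀y⟩ := exists_near_norm_res hW₀ hδ
    obtain ⟨z, hzE, hb1, hb2, hb3⟩ :=
      hb x hx y₁ hy₁E y₂ hy₂E (-y₀) (E₀.neg_mem hy₀E) hy₁n hy₂n
        (by rw [norm_neg]; exact hy₀n) δ hδ
    have habs : ∀ (w : E) (g : E →L[ℝ] ℝ), ‖w‖ ≤ 1 + δ → |g w| ≤ ‖g‖ * (1 + δ) := by
      intro w g hw
      rw [← Real.norm_eq_abs]
      exact (g.le_opNorm w).trans (mul_le_mul_of_nonneg_left hw (norm_nonneg g))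
    have e1 : χ₁ (x - z) ≤ δ * (‖χ₁‖ + 1) := by
      have h := (abs_le.mp (habs _ χ₁ hb1)).2
      have hsplit : χ₁ (x + y₁ - z) = χ₁ (x - z) + χ₁ y₁ := by
        rw [show x + y₁ - z = (x - z) + y₁ by abel, map_add]
      nlinarith
    have e2 : χ₂ (x - z) ≤ δ * (‖χ₂‖ + 1) := by
      have h := (abs_le.mp (habs _ χ₂ hb2)).2
      have hsplit : χ₂ (x + y₂ - z) = χ₂ (x - z) + χ₂ y₂ := by
        rw [show x + y₂ - z = (x - z) + y₂ by abel, map_add]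
      nlinarith
    have e0 : -(δ * (‖χ₀‖ + 1)) ≤ χ₀ (x - z) := by
      have h := (abs_le.mp (habs _ χ₀ hb3)).1
      have hsplit : χ₀ (x + -y₀ - z) = χ₀ (x - z) - χ₀ y₀ := by
        rw [show x + -y₀ - z = (x - z) - y₀ by abel, map_sub]
      nlinarith
    have hχ₀x : χ₀ x ≤ ‖χ₀‖ := by
      have h := χ₀.le_opNorm x
      rw [Real.norm_eq_abs] at h
      nlinarith [le_abs_self (χ₀ x), norm_nonneg χ₀]
    have e3 : ‖χ₁ + χ₂ - χ₀‖ - δ ≤ (χ₁ + χ₂ - χ₀) x := by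
      simp only [ContinuousLinearMap.sub_apply]
      have := hχx
      simp only [ContinuousLinearMap.add_apply] at this ⊢
      linarith
    have e4 : (χ₁ + χ₂ - χ₀) x = (χ₁ + χ₂ - χ₀) (x - z) := by
      have hz0 : (χ₁ + χ₂ - χ₀) z = 0 := hann z hzE
      rw [map_sub, hz0, sub_zero]
    have e5 : (χ₁ + χ₂ - χ₀) (x - z) = χ₁ (x - z) + χ₂ (x - z) - χ₀ (x - z) := by
      simp [ContinuousLinearMap.sub_apply, ContinuousLinearMap.add_apply]
    rw [e4, e5] at e3
    nlinarith
  have heq : χ₁ + χ₂ = χ₀ := sub_eq_zero.mp (norm_le_zero_iff.mp hψ)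
  rw [heq]
  exact hW₀

end NearNorm

section Projection

variable {E : Type*} [NormedAddCommGroup E] [NormedSpace ℝ E] {E₀ : Submodule ℝ E}

/-- The candidate projection (as a bare function). -/
noncomputable def MIP (hb : ThreeBall E₀) (φ : E →L[ℝ] ℝ) : E →L[ℝ] ℝ :=
  (exists_decomp hb φ).choose

lemma MIP_ann (hb : ThreeBall E₀) (φ : E →L[ℝ] ℝ) : ∀ y ∈ E₀, (φ - MIP hb φ) y = 0 :=
  (exists_decomp hb φ).choose_spec.1

lemma MIP_isW (hb : ThreeBall E₀) (φ : E →L[ℝ] ℝ) : IsW E₀ (MIP hb φ) :=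
  (exists_decomp hb φ).choose_spec.2.1

lemma MIP_norm (hb : ThreeBall E₀) (φ : E →L[ℝ] ℝ) :
    ‖φ‖ = ‖φ - MIP hb φ‖ + ‖MIP hb φ‖ :=
  (exists_decomp hb φ).choose_spec.2.2

lemma MIP_eq (hb : ThreeBall E₀) {φ χ : E →L[ℝ] ℝ}
    (hann : ∀ y ∈ E₀, (φ - χ) y = 0) (hχ : IsW E₀ χ) : MIP hb φ = χ :=
  decomp_unique hb (MIP_ann hb φ) (MIP_isW hb φ) hann hχ

lemma MIP_add (hb : ThreeBall E₀) (φ φ' : E →L[ℝ] ℝ) :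
    MIP hb (φ + φ') = MIP hb φ + MIP hb φ' := by
  refine MIP_eq hb ?_ (IsW.add hb (MIP_isW hb φ) (MIP_isW hb φ'))
  intro y hy
  have h1 := MIP_ann hb φ y hy
  have h2 := MIP_ann hb φ' y hy
  simp only [ContinuousLinearMap.sub_apply, ContinuousLinearMap.add_apply] at *
  linarith

lemma MIP_smul (hb : ThreeBall E₀) (c : ℝ) (φ : E →L[ℝ] ℝ) :
    MIP hb (c • φ) = c • MIP hb φ := by
  refine MIP_eq hb ?_ ((MIP_isW hb φ).smul c)
  intro y hy
  have h1 := MIP_ann hb φ y hy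
  simp only [ContinuousLinearMap.sub_apply, ContinuousLinearMap.smul_apply,
    smul_eq_mul] at *
  linear_combination c * h1

lemma MIP_bound (hb : ThreeBall E₀) (φ : E →L[ℝ] ℝ) : ‖MIP hb φ‖ ≤ 1 * ‖φ‖ := by
  have := MIP_norm hb φ
  have h2 := norm_nonneg (φ - MIP hb φ)
  linarith

/-- The candidate projection, as a continuous linear map. -/
noncomputable def MIProj (hb : ThreeBall E₀) : (E →L[ℝ] ℝ) →L[ℝ] (E →L[ℝ] ℝ) :=
  LinearMap.mkContinuous
    { toFun := MIP hb
      map_add' := MIP_add hb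
      map_smul' := fun c φ => by simpa using MIP_smul hb c φ }
    1 (MIP_bound hb)

lemma MIProj_apply (hb : ThreeBall E₀) (φ : E →L[ℝ] ℝ) : MIProj hb φ = MIP hb φ := rfl

/-- Backward direction: the 3-ball property implies being an M-ideal. -/
lemma threeBall_isMIdeal (hb : ThreeBall E₀) : IsMIdeal (E₀ : Set E) := by
  refine ⟨MIProj hb, ?_, ?_, ?_⟩
  · intro φ
    simp only [MIProj_apply]
    exact MIP_eq hb (fun y hy => by simp) (MIP_isW hb φ)
  · intro φ
    rw [MIProj_apply]
    constructor
    · intro h y hy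
      have h1 := MIP_ann hb φ y hy
      rw [h] at h1
      simpa using h1
    · intro h
      refine MIP_eq hb (fun y hy => ?_) (IsW.zero)
      simpa using h y hy
  · intro φ
    rw [MIProj_apply]
    have := MIP_norm hb φ
    linarith

end Projection

section Forward

variable {E : Type*} [NormedAddCommGroup E] [NormedSpace ℝ E] {E₀ : Submodule ℝ E}

lemma apply_le_norm (g : E →L[ℝ] ℝ) {v : E} (hv : ‖v‖ ≤ 1) : g v ≤ ‖g‖ := by
  have h := g.le_opNorm v
  rw [Real.norm_eq_abs] at h
  nlinarith [le_abs_self (g v), norm_nonneg g]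

/-- Forward direction: an M-ideal has the 3-ball property. -/
lemma isMIdeal_threeBall (h : IsMIdeal (E₀ : Set E)) : ThreeBall E₀ := by
  classical
  obtain ⟨P, hP2, hker, hnorm⟩ := h
  intro x hx y₁ hy₁ y₂ hy₂ y₃ hy₃ hn1 hn2 hn3 ε hε
  by_contra hcon
  push_neg at hcon
  set Y : Fin 3 → E := ![y₁, y₂, y₃] with hY
  have hYmem : ∀ i, Y i ∈ E₀ := by
    intro i; fin_cases i <;> simpa [hY]
  have hYnorm : ∀ i, ‖Y i‖ ≤ 1 := by
    intro i; fin_cases i <;> simpa [hY]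
  -- the convex set of triples
  set t : Set (Fin 3 → E) := (fun y : E => fun i => x + Y i - y) '' (E₀ : Set E) with ht_def
  have hconv_t : Convex ℝ t := by
    rintro w₁ ⟨a, haE, rfl⟩ w₂ ⟨b, hbE, rfl⟩ p q hp hq hpq
    refine ⟨p • a + q • b, E₀.add_mem (E₀.smul_mem _ haE) (E₀.smul_mem _ hbE), ?_⟩
    have hq1 : q = 1 - p := by linarith
    subst hq1
    funext i
    simp only [Pi.add_apply, Pi.smul_apply]
    module
  have hdisj : Disjoint (Metric.ball (0 : Fin 3 → E) (1 + ε)) t := by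
    rw [Set.disjoint_left]
    rintro w hws ⟨y, hyE, rfl⟩
    have hwn : ‖(fun i => x + Y i - y)‖ < 1 + ε := by
      rwa [← mem_ball_zero_iff]
    have hle : ∀ i, ‖x + Y i - y‖ ≤ 1 + ε := fun i =>
      (norm_le_pi_norm (fun j => x + Y j - y) i).trans hwn.le
    have h0 := hle 0
    have h1 := hle 1
    have h2 := hle 2
    simp only [hY, Matrix.cons_val_zero, Matrix.cons_val_one, Matrix.head_cons,
      Matrix.cons_val_two, Matrix.tail_cons] at h0 h1 h2
    have := hcon y hyE h0 h1
    linarith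
  obtain ⟨f, u, hfs, hft⟩ :=
    geometric_hahn_banach_open (convex_ball _ _) Metric.isOpen_ball hconv_t hdisj
  have hu0 : 0 < u := by
    have h0 := hfs 0 (Metric.mem_ball_self (by linarith))
    simpa using h0
  -- coordinate functionals
  set sgl : Fin 3 → (E →L[ℝ] (Fin 3 → E)) := fun i =>
    { toLinearMap := LinearMap.single ℝ (fun _ => E) i
      cont := by exact continuous_single (A := fun _ : Fin 3 => E) i } with hsgl
  set φ : Fin 3 → (E →L[ℝ] ℝ) := fun i => f.comp (sgl i) with hφ
  have hdecomp : ∀ w : Fin 3 → E, f w = ∑ i, φ i (w i) := by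
    intro w
    have hw : w = ∑ i, Pi.single i (w i) := by
      funext j
      rw [Finset.sum_apply]
      exact (Fintype.sum_pi_single j w).symm
    conv_lhs => rw [hw]
    rw [map_sum]
    rfl
  set Φ : E →L[ℝ] ℝ := ∑ i, φ i with hΦ
  have hΦapp : ∀ v : E, Φ v = ∑ i, φ i v := by
    intro v; rw [hΦ, ContinuousLinearMap.sum_apply]
  set SE : ℝ := ∑ i, φ i (x + Y i) with hSE
  have hkey : ∀ y ∈ E₀, u ≤ SE - Φ y := by
    intro y hy
    have hmem : (fun i => x + Y i - y) ∈ t := ⟨y, hy, rfl⟩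
    have := hft _ hmem
    rw [hdecomp] at this
    have heq : ∑ i, φ i (x + Y i - y) = SE - Φ y := by
      rw [hSE, hΦapp, ← Finset.sum_sub_distrib]
      exact Finset.sum_congr rfl fun i _ => by rw [map_sub]
    linarith [heq ▸ this]
  have hΦ0 : ∀ y ∈ E₀, Φ y = 0 := by
    intro y hy
    by_contra hne
    set c : ℝ := (SE - u + 1) / Φ y with hc
    have hmem : c • y ∈ E₀ := E₀.smul_mem c hy
    have := hkey _ hmem
    rw [map_smul, smul_eq_mul] at this
    rw [hc] at this
    field_simp at this
    linarith
  have huSE : u ≤ SE := by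
    have := hkey 0 E₀.zero_mem
    simpa using this
  -- M-ideal estimate : SE ≤ ∑ ‖φ i‖
  set S : ℝ := ∑ i, ‖φ i‖ with hS
  have hSnn : 0 ≤ S := Finset.sum_nonneg fun i _ => norm_nonneg _
  have hSE_le : SE ≤ S := by
    have hψann : ∀ i, ∀ y ∈ E₀, (φ i - P (φ i)) y = 0 := by
      intro i
      refine (hker _).mp ?_
      rw [map_sub, hP2]
      exact sub_self _
    have hPΦ : P Φ = 0 := (hker Φ).mpr (fun y hy => hΦ0 y hy)
    have hterm : ∀ i, φ i (x + Y i) =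
        (φ i - P (φ i)) x + (P (φ i)) x + (P (φ i)) (Y i) := by
      intro i
      have hzero : (φ i - P (φ i)) (Y i) = 0 := hψann i (Y i) (hYmem i)
      simp only [ContinuousLinearMap.sub_apply] at hzero ⊢
      rw [map_add]
      linarith
    have hPsum : ∑ i, (P (φ i)) x = 0 := by
      have : ∑ i, P (φ i) = P Φ := by rw [hΦ, map_sum]
      calc ∑ i, (P (φ i)) x = (∑ i, P (φ i)) x := by
            rw [ContinuousLinearMap.sum_apply]
        _ = (P Φ) x := by rw [this]
        _ = 0 := by rw [hPΦ]; rfl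
    have hbound : ∀ i, (φ i - P (φ i)) x + (P (φ i)) (Y i) ≤ ‖φ i‖ := by
      intro i
      have h1 : (φ i - P (φ i)) x ≤ ‖φ i - P (φ i)‖ := apply_le_norm _ hx
      have h2 : (P (φ i)) (Y i) ≤ ‖P (φ i)‖ := apply_le_norm _ (hYnorm i)
      have h3 := hnorm (φ i)
      linarith
    calc SE = ∑ i, ((φ i - P (φ i)) x + (P (φ i)) (Y i)) + ∑ i, (P (φ i)) x := by
          rw [hSE, ← Finset.sum_add_distrib]
          exact Finset.sum_congr rfl fun i _ => by rw [hterm i]; ring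
      _ = ∑ i, ((φ i - P (φ i)) x + (P (φ i)) (Y i)) := by rw [hPsum, add_zero]
      _ ≤ ∑ i, ‖φ i‖ := Finset.sum_le_sum fun i _ => hbound i
  -- opposite estimate
  have hupper : (1 + ε) * S ≤ u := by
    refine le_of_forall_small (C := S + 3 * (1 + ε)) fun δ hδ hδ1 => ?_
    have hv : ∀ i : Fin 3, ∃ v : E, ‖v‖ ≤ 1 ∧ ‖φ i‖ - δ ≤ (φ i) v := fun i =>
      exists_near_norm (φ i) hδ
    choose v hv1 hv2 using hv
    have hvn : ‖v‖ ≤ 1 := pi_norm_le_iff_of_nonneg zero_le_one |>.mpr hv1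
    set c : ℝ := 1 + ε - δ with hc
    have hc0 : 0 < c := by linarith
    have hmem : c • v ∈ Metric.ball (0 : Fin 3 → E) (1 + ε) := by
      rw [mem_ball_zero_iff, norm_smul, Real.norm_eq_abs, abs_of_pos hc0]
      nlinarith
    have hlt := hfs _ hmem
    rw [map_smul, smul_eq_mul] at hlt
    have hfv : S - 3 * δ ≤ f v := by
      rw [hdecomp v]
      have : S - 3 * δ = ∑ i : Fin 3, (‖φ i‖ - δ) := by
        rw [Finset.sum_sub_distrib, ← hS]
        simp
      rw [this]
      exact Finset.sum_le_sum fun i _ => hv2 i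
    nlinarith
  nlinarith

end Forward

end MIdealAux

/-- A closed subspace `E₀` of a real Banach space `E` is an M-ideal in `E` if and only if
it has the 3-ball property. -/
theorem isMIdeal_iff_threeBallProperty {E : Type*} [NormedAddCommGroup E] [NormedSpace ℝ E]
    [CompleteSpace E] (E₀ : Submodule ℝ E) (hE₀ : IsClosed (E₀ : Set E)) :
    IsMIdeal (E₀ : Set E) ↔
      ∀ x : E, ‖x‖ ≤ 1 →
        ∀ y₁ ∈ E₀, ∀ y₂ ∈ E₀, ∀ y₃ ∈ E₀,
          ‖y₁‖ ≤ 1 → ‖y₂‖ ≤ 1 → ‖y₃‖ ≤ 1 →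
            ∀ ε > (0 : ℝ), ∃ y ∈ E₀,
              ‖x + y₁ - y‖ ≤ 1 + ε ∧ ‖x + y₂ - y‖ ≤ 1 + ε ∧ ‖x + y₃ - y‖ ≤ 1 + ε := by
  constructor
  · intro h
    exact MIdealAux.isMIdeal_threeBall h
  · intro h
    exact MIdealAux.threeBall_isMIdeal h
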